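/- Let A and B be Banach algebras and T : B → A a continuous algebra homomorphism with ‖T‖ ≤ 1. Then the Cartesian product A × B, equipped with the multiplication (a₁,b₁)·(a₂,b₂) = (a₁a₂ + a₁T(b₂) + T(b₁)a₂, b₁b₂) and the norm ‖(a,b)‖ = ‖a‖ + ‖b‖, is a Banach algebra (in particular the multiplication is associative and submultiplicative for this norm). -/

import Mathlib

open ContinuousLinearMap NormedSpace

variable {A B : Type*}
  [NonUnitalNormedRing A] [NormedSpace ℂ A] [IsScalarTower ℂ A A] [SMulCommClass ℂ A A]
  [CompleteSpace A]
  [NonUnitalNormedRing B] [NormedSpace ℂ B] [IsScalarTower ℂ B B] [SMulCommClass ℂ B B]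
  [CompleteSpace B]

/-- The morphism-product multiplication on `A × B`:
`(a₁,b₁)·(a₂,b₂) = (a₁a₂ + a₁T(b₂) + T(b₁)a₂, b₁b₂)`. -/
noncomputable def tMul (T : B →L[ℂ] A) (u v : A × B) : A × B :=
  (u.1 * v.1 + u.1 * T v.2 + T u.2 * v.1, u.2 * v.2)

/-- The ℓ¹ norm `‖(a,b)‖ = ‖a‖ + ‖b‖` on `A × B`. -/
noncomputable def tNorm (u : A × B) : ℝ := ‖u.1‖ + ‖u.2‖

/-- Auxiliary map: for `Φ` in the second dual of `E` and a bundled bilinear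
multiplication `M` on `E`, this is `f ↦ (a ↦ Φ (f ∘ M a))`, i.e. `f ↦ Φ · f`. -/
noncomputable def rAct {E : Type*} [NormedAddCommGroup E] [NormedSpace ℂ E]
    (M : E →L[ℂ] E →L[ℂ] E) (Φ : StrongDual ℂ (StrongDual ℂ E)) : StrongDual ℂ E →L[ℂ] StrongDual ℂ E :=
  (compL ℂ E (StrongDual ℂ E) ℂ Φ).comp
    (((compL ℂ E (E →L[ℂ] E) (StrongDual ℂ E)).flip M).comp (compL ℂ E E ℂ))

/-- The first Arens product `Φ □ Ψ` on the second dual of `E`, where the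
multiplication of `E` is given by the bundled bilinear map `M`:
`⟨Φ□Ψ, f⟩ = ⟨Φ, Ψ·f⟩` with `(Ψ·f)(a) = Ψ(f·a)` and `(f·a)(x) = f(ax)`. -/
noncomputable def arens1 {E : Type*} [NormedAddCommGroup E] [NormedSpace ℂ E]
    (M : E →L[ℂ] E →L[ℂ] E) (Φ Ψ : StrongDual ℂ (StrongDual ℂ E)) : StrongDual ℂ (StrongDual ℂ E) :=
  Φ.comp (rAct M Ψ)

/-- The second Arens product `Φ ◊ Ψ` on the second dual of `E`:
`⟨Φ◊Ψ, f⟩ = ⟨Ψ, f·Φ⟩` with `(f·Φ)(a) = Φ(a·f)` and `(a·f)(x) = f(xa)`. -/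
noncomputable def arens2 {E : Type*} [NormedAddCommGroup E] [NormedSpace ℂ E]
    (M : E →L[ℂ] E →L[ℂ] E) (Φ Ψ : StrongDual ℂ (StrongDual ℂ E)) : StrongDual ℂ (StrongDual ℂ E) :=
  Ψ.comp (rAct M.flip Φ)

/-- Bundled bilinear map `(u,v) ↦ M (f u) (g v)`. -/
noncomputable def bcomp {P E : Type*} [NormedAddCommGroup P] [NormedSpace ℂ P]
    [NormedAddCommGroup E] [NormedSpace ℂ E]
    (M : E →L[ℂ] E →L[ℂ] E) (f g : P →L[ℂ] E) : P →L[ℂ] P →L[ℂ] E :=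
  ((compL ℂ P E E).flip g).comp (M.comp f)

/-- The morphism-product multiplication `tMul T`, as a bundled bilinear map;
`tMulCLM T u v = tMul T u v`. -/
noncomputable def tMulCLM (T : B →L[ℂ] A) : (A × B) →L[ℂ] (A × B) →L[ℂ] (A × B) :=
  ((compL ℂ (A × B) A (A × B) (inl ℂ A B)).comp
    (bcomp (mul ℂ A) (fst ℂ A B) (fst ℂ A B + T.comp (snd ℂ A B)) +
     bcomp (mul ℂ A) (T.comp (snd ℂ A B)) (fst ℂ A B))) +
  ((compL ℂ (A × B) B (A × B) (inr ℂ A B)).comp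
    (bcomp (mul ℂ B) (snd ℂ A B) (snd ℂ A B)))

/-- The adjoint `T' : A' → B'`, `T'(f) = f ∘ T`. -/
noncomputable def dualT (T : B →L[ℂ] A) : StrongDual ℂ A →L[ℂ] StrongDual ℂ B := (compL ℂ B A ℂ).flip T

/-- The double adjoint `T'' : B'' → A''`, `T''(F) = F ∘ T'`. -/
noncomputable def ddT (T : B →L[ℂ] A) : StrongDual ℂ (StrongDual ℂ B) →L[ℂ] StrongDual ℂ (StrongDual ℂ A) :=
  (compL ℂ (StrongDual ℂ A) (StrongDual ℂ B) ℂ).flip (dualT T)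

/-- The identification `Θ : A'' × B'' → (A × B)''`, `Θ(Φ,Ψ)(F) = Φ(F∘inl) + Ψ(F∘inr)`,
i.e. `Θ(Φ,Ψ)(f,g) = Φ(f) + Ψ(g)` under the identification `(A × B)' ≅ A' × B'`. -/
noncomputable def Theta (Φ : StrongDual ℂ (StrongDual ℂ A)) (Ψ : StrongDual ℂ (StrongDual ℂ B)) :
    StrongDual ℂ (StrongDual ℂ (A × B)) :=
  Φ.comp ((compL ℂ A (A × B) ℂ).flip (inl ℂ A B)) +
  Ψ.comp ((compL ℂ B (A × B) ℂ).flip (inr ℂ A B))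

/-- The functional `(a,b) ↦ φ(a) + φ(T(b))` on `A × B`, for `φ : A → ℂ`. -/
noncomputable def charExt (T : B →L[ℂ] A) (φ : A →L[ℂ] ℂ) : (A × B) →L[ℂ] ℂ :=
  φ.comp (fst ℂ A B) + (φ.comp T).comp (snd ℂ A B)

/-- The functional `(a,b) ↦ ψ(b)` on `A × B`, for `ψ : B → ℂ`. -/
noncomputable def charSnd (ψ : B →L[ℂ] ℂ) : (A × B) →L[ℂ] ℂ :=
  ψ.comp (snd ℂ A B)

/-- `A ×_T B` is a Banach algebra: the multiplication `tMul T` is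
associative, bilinear, submultiplicative for the norm `tNorm`, and the space is
complete (`tNorm` being equivalent to the product norm). -/
theorem morphism_product_is_banach_algebra
    (T : B →L[ℂ] A) (hT : ∀ x y, T (x * y) = T x * T y) (hTn : ‖T‖ ≤ 1) :
    (∀ u v w : A × B, tMul T (tMul T u v) w = tMul T u (tMul T v w)) ∧
    (∀ u v w : A × B, tMul T (u + v) w = tMul T u w + tMul T v w) ∧
    (∀ u v w : A × B, tMul T u (v + w) = tMul T u v + tMul T u w) ∧
    (∀ (c : ℂ) (u v : A × B),
      tMul T (c • u) v = c • tMul T u v ∧ tMul T u (c • v) = c • tMul T u v) ∧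
    (∀ u v : A × B, tNorm (tMul T u v) ≤ tNorm u * tNorm v) ∧
    (∀ u : A × B, ‖u‖ ≤ tNorm u ∧ tNorm u ≤ 2 * ‖u‖) ∧
    CompleteSpace (A × B) := by
  refine ⟨?_, ?_, ?_, ?_, ?_, ?_, inferInstance⟩
  · intro u v w
    simp only [tMul, Prod.mk.injEq, hT, map_add]
    constructor
    · noncomm_ring
    · noncomm_ring
  · intro u v w
    simp only [tMul, Prod.fst_add, Prod.snd_add, map_add, Prod.mk_add_mk, Prod.mk.injEq]
    constructor
    · noncomm_ring
    · noncomm_ring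
  · intro u v w
    simp only [tMul, Prod.fst_add, Prod.snd_add, map_add, Prod.mk_add_mk, Prod.mk.injEq]
    constructor
    · noncomm_ring
    · noncomm_ring
  · intro c u v
    constructor <;>
    · simp only [tMul, Prod.smul_fst, Prod.smul_snd, map_smul, Prod.smul_mk, Prod.mk.injEq,
        smul_add]
      constructor
      · simp [mul_smul_comm, smul_mul_assoc]
      · simp [mul_smul_comm, smul_mul_assoc]
  · intro u v
    have hTu : ‖T u.2‖ ≤ ‖u.2‖ := by
      calc ‖T u.2‖ ≤ ‖T‖ * ‖u.2‖ := T.le_opNorm _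
        _ ≤ 1 * ‖u.2‖ := by gcongr
        _ = ‖u.2‖ := one_mul _
    have hTv : ‖T v.2‖ ≤ ‖v.2‖ := by
      calc ‖T v.2‖ ≤ ‖T‖ * ‖v.2‖ := T.le_opNorm _
        _ ≤ 1 * ‖v.2‖ := by gcongr
        _ = ‖v.2‖ := one_mul _
    have h1 : ‖u.1 * v.1 + u.1 * T v.2 + T u.2 * v.1‖ ≤
        ‖u.1‖ * ‖v.1‖ + ‖u.1‖ * ‖v.2‖ + ‖u.2‖ * ‖v.1‖ := by
      calc ‖u.1 * v.1 + u.1 * T v.2 + T u.2 * v.1‖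
          ≤ ‖u.1 * v.1 + u.1 * T v.2‖ + ‖T u.2 * v.1‖ := norm_add_le _ _
        _ ≤ ‖u.1 * v.1‖ + ‖u.1 * T v.2‖ + ‖T u.2 * v.1‖ := by
            gcongr; exact norm_add_le _ _
        _ ≤ ‖u.1‖ * ‖v.1‖ + ‖u.1‖ * ‖v.2‖ + ‖u.2‖ * ‖v.1‖ := by
            gcongr
            · exact norm_mul_le _ _
            · exact le_trans (norm_mul_le _ _) (by gcongr)
            · exact le_trans (norm_mul_le _ _) (by gcongr)
    have h2 : ‖u.2 * v.2‖ ≤ ‖u.2‖ * ‖v.2‖ := norm_mul_le _ _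
    simp only [tMul, tNorm]
    nlinarith [norm_nonneg u.1, norm_nonneg u.2, norm_nonneg v.1, norm_nonneg v.2]
  · intro u
    have h1 : ‖u.1‖ ≤ ‖u‖ := norm_fst_le u
    have h2 : ‖u.2‖ ≤ ‖u‖ := norm_snd_le u
    have h3 : ‖u‖ = max ‖u.1‖ ‖u.2‖ := rfl
    constructor
    · simp only [tNorm]
      rw [h3]
      exact max_le (le_add_of_nonneg_right (norm_nonneg _)) (le_add_of_nonneg_left (norm_nonneg _))
    · simp only [tNorm]; linarith
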